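/- Suppose Conditions 1–2, 4–6 and Conditions 8–9 (sparse GLM propensity score with lasso-type rates for γ̂, and link derivative lower bound) hold with s_π = o(√n / log p), and let M_γ ≍ 1 be sufficiently large. Then with probability converging to 1, |X_i^⊤γ̂| ≤ M_γ for all i in the main sample and |X_{aux,i}^⊤γ̂| ≤ M_γ for all i in the auxiliary sample; consequently the trimming in the PS estimate is inactive, i.e. π̂_i = φ(X_i^⊤γ̂) and π̂_{aux,i} = φ(X_{aux,i}^⊤γ̂) for all i. -/

import Mathlib

open MeasureTheory ProbabilityTheory Filter
open scoped BigOperators ENNReal NNReal Topology Classical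

noncomputable section

namespace DCalATE

/-- Euclidean dot product on `ℝ^k`. -/
def dot {k : ℕ} (x y : Fin k → ℝ) : ℝ := ∑ j, x j * y j

/-- `ℓ¹` norm. -/
def l1 {k : ℕ} (v : Fin k → ℝ) : ℝ := ∑ j, |v j|

/-- squared `ℓ²` norm. -/
def l2sq {k : ℕ} (v : Fin k → ℝ) : ℝ := ∑ j, (v j) ^ 2

/-- `ℓ²` norm. -/
def l2 {k : ℕ} (v : Fin k → ℝ) : ℝ := Real.sqrt (l2sq v)

/-- `ℓ⁰` "norm": number of nonzero coordinates (sparsity). -/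
def sparsity {k : ℕ} (v : Fin k → ℝ) : ℕ := (Finset.univ.filter fun j => v j ≠ 0).card

/-- `clamp M t = t·1{|t| ≤ M} + sign(t)·M·1{|t| > M}`. -/
def clamp (M t : ℝ) : ℝ := min M (max (-M) t)

/-- zero-padding of a `p`-vector to a `(p ∨ n)`-vector. -/
def pad {p n : ℕ} (v : Fin p → ℝ) : Fin (max p n) → ℝ :=
  fun j => if h : (j : ℕ) < p then v ⟨j, h⟩ else 0

/-- All observed and estimated quantities at sample size `n`, ambient dimension `p`:
the main sample `(X, T, Y)` (with potential outcome `Y1 = Y(1)`), the auxiliary sample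
`(Xaux, Taux, Yaux)`, the training-sample estimates `bhat = β̂`, `ghat = γ̂`, and the
augmented covariates `Xt = X̃` of dimension `p ∨ n`. -/
structure Data (Ω : Type*) (p n : ℕ) where
  X : Ω → Fin n → Fin p → ℝ
  T : Ω → Fin n → ℝ
  Y : Ω → Fin n → ℝ
  Y1 : Ω → Fin n → ℝ
  Xaux : Ω → Fin n → Fin p → ℝ
  Taux : Ω → Fin n → ℝ
  Yaux : Ω → Fin n → ℝ
  bhat : Ω → Fin p → ℝ
  ghat : Ω → Fin p → ℝ
  Xt : Ω → Fin n → Fin (max p n) → ℝ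

variable {Ω : Type*} [MeasurableSpace Ω] {p n : ℕ}

/-- initial OR estimate `r̂_i = ψ(X_i^⊤β̂)` on the main sample. -/
def rh (ψ : ℝ → ℝ) (D : Data Ω p n) (ω : Ω) (i : Fin n) : ℝ :=
  ψ (dot (D.X ω i) (D.bhat ω))

/-- initial OR estimate on the auxiliary sample. -/
def rhAux (ψ : ℝ → ℝ) (D : Data Ω p n) (ω : Ω) (i : Fin n) : ℝ :=
  ψ (dot (D.Xaux ω i) (D.bhat ω))

/-- trimmed initial PS estimate `π̂_i` on the main sample. -/
def ph (φ : ℝ → ℝ) (Mγ : ℝ) (D : Data Ω p n) (ω : Ω) (i : Fin n) : ℝ :=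
  φ (clamp Mγ (dot (D.X ω i) (D.ghat ω)))

/-- trimmed initial PS estimate on the auxiliary sample. -/
def phAux (φ : ℝ → ℝ) (Mγ : ℝ) (D : Data Ω p n) (ω : Ω) (i : Fin n) : ℝ :=
  φ (clamp Mγ (dot (D.Xaux ω i) (D.ghat ω)))

/-- diagonal weight `Π_{ii} = φ'(X_i^⊤γ̂)/π̂_i` on the main sample. -/
def wgt (φ : ℝ → ℝ) (Mγ : ℝ) (D : Data Ω p n) (ω : Ω) (i : Fin n) : ℝ :=
  deriv φ (dot (D.X ω i) (D.ghat ω)) / ph φ Mγ D ω i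

/-- diagonal weight on the auxiliary sample. -/
def wgtAux (φ : ℝ → ℝ) (Mγ : ℝ) (D : Data Ω p n) (ω : Ω) (i : Fin n) : ℝ :=
  deriv φ (dot (D.Xaux ω i) (D.ghat ω)) / phAux φ Mγ D ω i

/-- `j`-th coordinate of the auxiliary balancing target `n_aux⁻¹ X_aux^⊤ Π_aux R̃_aux`. -/
def auxTarget (ψ φ : ℝ → ℝ) (Mγ : ℝ) (D : Data Ω p n) (ω : Ω) (j : Fin p) : ℝ :=
  (n : ℝ)⁻¹ * ∑ i, wgtAux φ Mγ D ω i *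
    (D.Taux ω i / phAux φ Mγ D ω i * (D.Yaux ω i - rhAux ψ D ω i)) * D.Xaux ω i j

/-- Feasibility for the OR-calibration program. -/
def ORFeas (ψ φ : ℝ → ℝ) (Mγ ηr Mr : ℝ) (D : Data Ω p n) (ω : Ω) (v : Fin n → ℝ) : Prop :=
  (∀ j, |auxTarget ψ φ Mγ D ω j - (n : ℝ)⁻¹ * ∑ i, wgt φ Mγ D ω i * v i * D.X ω i j| ≤ ηr) ∧
  ∀ i, |v i| ≤ Mr

/-- `v` solves the OR-calibration program: it is feasible and minimizes `n⁻¹‖·‖₂²`. -/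
def orSol (ψ φ : ℝ → ℝ) (Mγ ηr Mr : ℝ) (D : Data Ω p n) (ω : Ω) (v : Fin n → ℝ) : Prop :=
  ORFeas ψ φ Mγ ηr Mr D ω v ∧ ∀ v', ORFeas ψ φ Mγ ηr Mr D ω v' → l2sq v ≤ l2sq v'

/-- Feasibility for the PS-calibration program. -/
def PSFeas (ψ φ : ℝ → ℝ) (ηπ1 ηπ2 Mπ : ℝ) (D : Data Ω p n) (ω : Ω)
    (μh : Fin n → ℝ) (γ : Fin (max p n) → ℝ) : Prop :=
  (∀ j : Fin p,
    |(n : ℝ)⁻¹ * ∑ i, (D.T ω i / φ (dot (D.Xt ω i) γ) - 1) *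
        (deriv ψ (dot (D.X ω i) (D.bhat ω)) * D.X ω i j)|
      ≤ ηπ1 * l2 (fun i => deriv ψ (dot (D.X ω i) (D.bhat ω)) * D.X ω i j) / Real.sqrt n) ∧
  (|(n : ℝ)⁻¹ * ∑ i, (D.T ω i / φ (dot (D.Xt ω i) γ) - 1) * μh i|
      ≤ ηπ1 * l2 μh / Real.sqrt n) ∧
  (∀ j : Fin (max p n),
    |(n : ℝ)⁻¹ * ∑ i, (D.T ω i / φ (dot (D.Xt ω i) γ) - 1) * D.Xt ω i j|
      ≤ ηπ2 * l2 (fun i => D.Xt ω i j) / Real.sqrt n) ∧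
  (∀ i, D.T ω i / φ (dot (D.Xt ω i) γ) ≤ Mπ)

/-- `γt` solves the PS-calibration program: whenever the program is feasible, `γt` is feasible
and minimizes `‖γ - γ̂‖₁`; when it is infeasible, `γt` equals the zero-padded `γ̂`. -/
def psSol (ψ φ : ℝ → ℝ) (ηπ1 ηπ2 Mπ : ℝ) (D : Data Ω p n) (ω : Ω)
    (μh : Fin n → ℝ) (γt : Fin (max p n) → ℝ) : Prop :=
  ((∃ γ, PSFeas ψ φ ηπ1 ηπ2 Mπ D ω μh γ) →
      PSFeas ψ φ ηπ1 ηπ2 Mπ D ω μh γt ∧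
      ∀ γ', PSFeas ψ φ ηπ1 ηπ2 Mπ D ω μh γ' →
        l1 (fun j => γt j - pad (D.ghat ω) j) ≤ l1 (fun j => γ' j - pad (D.ghat ω) j)) ∧
  ((¬ ∃ γ, PSFeas ψ φ ηπ1 ηπ2 Mπ D ω μh γ) → γt = pad (D.ghat ω))

/-- calibrated OR value `r̃_i = r̂_i + μ̂_i`. -/
def rt (ψ : ℝ → ℝ) (D : Data Ω p n) (ω : Ω) (μh : Fin n → ℝ) (i : Fin n) : ℝ :=
  rh ψ D ω i + μh i

/-- calibrated PS value `π̃_i = φ(X̃_i^⊤γ̃)`. -/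
def pt (φ : ℝ → ℝ) (D : Data Ω p n) (ω : Ω) (γt : Fin (max p n) → ℝ) (i : Fin n) : ℝ :=
  φ (dot (D.Xt ω i) γt)

/-- the Doubly-Calibrated ATE estimator `τ̂_DCal`. -/
def tauDCal (ψ φ : ℝ → ℝ) (D : Data Ω p n) (ω : Ω) (μh : Fin n → ℝ)
    (γt : Fin (max p n) → ℝ) : ℝ :=
  (n : ℝ)⁻¹ * ∑ i, (D.T ω i * (D.Y ω i - rt ψ D ω μh i) / pt φ D ω γt i + rt ψ D ω μh i)

/-- the target `τ̄* = n⁻¹ Σ_i r*(X_i)`. -/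
def tauBar (rs : (Fin p → ℝ) → ℝ) (D : Data Ω p n) (ω : Ω) : ℝ :=
  (n : ℝ)⁻¹ * ∑ i, rs (D.X ω i)

section Conditions

variable (μ : Measure Ω)

/-- Basic sampling structure: binary treatments, consistency `Y = Y(1)` on `{T = 1}`,
i.i.d. observations within the main and auxiliary samples (equal in law), independence of the
main sample from the auxiliary/training information, identification of `π*` as the
propensity score and of `r*` as the outcome regression (`E[TY|X] = π*(X) r*(X)`),
and augmented covariates extending `X` by i.i.d. `Uniform[-1,1]` coordinates independent of
everything else. -/
def WellPosed (D : Data Ω p n) (πs rs : (Fin p → ℝ) → ℝ) : Prop :=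
  (∀ᵐ ω ∂μ, ∀ i, (D.T ω i = 0 ∨ D.T ω i = 1) ∧ (D.Taux ω i = 0 ∨ D.Taux ω i = 1)) ∧
  (∀ᵐ ω ∂μ, ∀ i, D.T ω i = 1 → D.Y ω i = D.Y1 ω i) ∧
  iIndepFun
    (fun i ω => (D.X ω i, D.T ω i, D.Y ω i, D.Y1 ω i)) μ ∧
  (∀ i j, IdentDistrib (fun ω => (D.X ω i, D.T ω i, D.Y ω i, D.Y1 ω i))
      (fun ω => (D.X ω j, D.T ω j, D.Y ω j, D.Y1 ω j)) μ μ) ∧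
  iIndepFun (fun i ω => (D.Xaux ω i, D.Taux ω i, D.Yaux ω i)) μ ∧
  (∀ i j, IdentDistrib (fun ω => (D.Xaux ω i, D.Taux ω i, D.Yaux ω i))
      (fun ω => (D.X ω j, D.T ω j, D.Y ω j)) μ μ) ∧
  IndepFun (fun ω => (D.X ω, D.T ω, D.Y ω, D.Y1 ω))
    (fun ω => (D.Xaux ω, D.Taux ω, D.Yaux ω, D.bhat ω, D.ghat ω)) μ ∧
  IndepFun (fun ω => (D.Xaux ω, D.Taux ω, D.Yaux ω)) (fun ω => (D.bhat ω, D.ghat ω)) μ ∧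
  (∀ i, μ[(fun ω => D.T ω i) | MeasurableSpace.comap (fun ω => D.X ω i) inferInstance]
      =ᵐ[μ] fun ω => πs (D.X ω i)) ∧
  (∀ i, μ[(fun ω => D.T ω i * D.Y ω i) |
        MeasurableSpace.comap (fun ω => D.X ω i) inferInstance]
      =ᵐ[μ] fun ω => πs (D.X ω i) * rs (D.X ω i)) ∧
  (∀ ω i (j : Fin p), D.Xt ω i (Fin.castLE (le_max_left p n) j) = D.X ω i j) ∧
  (∀ i (j : Fin (max p n)), p ≤ (j : ℕ) →
      Measure.map (fun ω => D.Xt ω i j) μ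
        = (2 : ℝ≥0∞)⁻¹ • (volume.restrict (Set.Icc (-1 : ℝ) 1))) ∧
  iIndepFun
    (fun (ij : Fin n × {j : Fin (max p n) // p ≤ (j : ℕ)}) ω => D.Xt ω ij.1 ij.2.1) μ ∧
  IndepFun (fun ω (ij : Fin n × {j : Fin (max p n) // p ≤ (j : ℕ)}) => D.Xt ω ij.1 ij.2.1)
    (fun ω => (D.X ω, D.T ω, D.Y ω, D.Y1 ω, D.Xaux ω, D.Taux ω, D.Yaux ω, D.bhat ω, D.ghat ω)) μ

variable [StandardBorelSpace Ω] [IsFiniteMeasure μ]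

/-- Condition 1 (unconfoundedness): `Y(1) ⟂ T | X` for each observation. -/
def Unconf (D : Data Ω p n) : Prop :=
  ∀ i, ∃ hle : MeasurableSpace.comap (fun ω => D.X ω i) inferInstance ≤ ‹MeasurableSpace Ω›,
    CondIndepFun (MeasurableSpace.comap (fun ω => D.X ω i) inferInstance) hle
      (fun ω => D.Y1 ω i) (fun ω => D.T ω i) μ

end Conditions

section Conditions2

variable (μ : Measure Ω)

/-- Condition 2 (overlap): `c_π < π*(X) < 1 - c_π` almost surely. -/
def Cond2 (cπ : ℝ) (D : Data Ω p n) (πs : (Fin p → ℝ) → ℝ) : Prop :=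
  ∀ᵐ ω ∂μ, ∀ i, (cπ < πs (D.X ω i) ∧ πs (D.X ω i) < 1 - cπ) ∧
    (cπ < πs (D.Xaux ω i) ∧ πs (D.Xaux ω i) < 1 - cπ)

/-- Condition 4 (bounded outcome): `|Y(1)|, |r*(X)| ≤ m_Y` almost surely. -/
def Cond4 (mY : ℝ) (D : Data Ω p n) (rs : (Fin p → ℝ) → ℝ) : Prop :=
  ∀ᵐ ω ∂μ, ∀ i, |D.Y1 ω i| ≤ mY ∧ |rs (D.X ω i)| ≤ mY

/-- Condition 5 (design): intercept, bounded mean-zero sub-Gaussian remaining coordinates,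
full-rank design matrix. -/
def Cond5 (mZ σZ : ℝ) (hp : 0 < p) (D : Data Ω p n) : Prop :=
  (∀ᵐ ω ∂μ, ∀ i, D.X ω i ⟨0, hp⟩ = 1 ∧ ∀ j : Fin p, j ≠ ⟨0, hp⟩ → |D.X ω i j| ≤ mZ) ∧
  (∀ i (j : Fin p), j ≠ ⟨0, hp⟩ → ∫ ω, D.X ω i j ∂μ = 0) ∧
  (∀ᵐ ω ∂μ, (Matrix.of (D.X ω)).rank = min n p) ∧
  (∀ i (u : Fin p → ℝ), u ⟨0, hp⟩ = 0 → l2sq u = 1 →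
    ∀ α : ℝ, ∫ ω, Real.exp (α * dot u (D.X ω i)) ∂μ ≤ Real.exp (α ^ 2 * σZ ^ 2 / 2))

end Conditions2

/-- a monotonically increasing, twice differentiable link with first and second derivatives
uniformly bounded by `m`. -/
def GoodLink (g : ℝ → ℝ) (m : ℝ) : Prop :=
  StrictMono g ∧ (∀ t, DifferentiableAt ℝ g t) ∧ (∀ t, DifferentiableAt ℝ (deriv g) t) ∧
  (∀ t, |deriv g t| ≤ m) ∧ (∀ t, |deriv (deriv g) t| ≤ m)

/-- the PS link takes values approaching `1` at `+∞` and `0` at `-∞`. -/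
def PSLink (φ : ℝ → ℝ) : Prop :=
  Tendsto φ atTop (𝓝 1) ∧ Tendsto φ atBot (𝓝 0)

/-- Condition 9: lower bound on `|φ'|` on compacta. -/
def Cond9 (φ : ℝ → ℝ) : Prop :=
  ∀ u : ℝ, 0 < u → ∃ c : ℝ, 0 < c ∧ ∀ w : ℝ, |w| ≤ u → c ≤ |deriv φ w|

end DCalATE

namespace DCalATE

lemma clamp_eq_self {M t : ℝ} (h : |t| ≤ M) : clamp M t = t := by
  rw [abs_le] at h
  unfold clamp
  rw [max_eq_right h.1, min_eq_right h.2]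

lemma dot_split {k : ℕ} (x g γ : Fin k → ℝ) :
    dot x g = dot x γ + dot x (fun j => g j - γ j) := by
  simp only [dot]
  rw [← Finset.sum_add_distrib]
  exact Finset.sum_congr rfl fun j _ => by ring

lemma abs_dot_le {k : ℕ} {x v : Fin k → ℝ} {M : ℝ} (hx : ∀ j, |x j| ≤ M) :
    |dot x v| ≤ M * l1 v := by
  calc |dot x v| ≤ ∑ j, |x j * v j| := Finset.abs_sum_le_sum_abs _ _
    _ ≤ ∑ j, M * |v j| := Finset.sum_le_sum fun j _ => by
        rw [abs_mul]
        exact mul_le_mul_of_nonneg_right (hx j) (abs_nonneg _)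
    _ = M * l1 v := by rw [l1, Finset.mul_sum]

/-- **Lemma (inactive trimming)**: under Conditions 1–2, 4–6 and 8–9 with
`s_π = o(√n / log p)` and `M_γ ≍ 1` sufficiently large, with probability converging to one
`|X_i^⊤γ̂| ≤ M_γ` and `|X_{aux,i}^⊤γ̂| ≤ M_γ` for all `i`, so that the trimming in the PS
estimate is inactive: `π̂_i = φ(X_i^⊤γ̂)` and `π̂_{aux,i} = φ(X_{aux,i}^⊤γ̂)`. -/
theorem trimming_inactive
    {Ω : Type*} [MeasurableSpace Ω] [StandardBorelSpace Ω] [Nonempty Ω]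
    (μ : Measure Ω) [IsProbabilityMeasure μ]
    (p : ℕ → ℕ) (hp : ∀ n, 0 < p n) (hpTop : Tendsto (fun n => p n) atTop atTop)
    (D : ∀ n, Data Ω (p n) n)
    (πs rs : ∀ n, (Fin (p n) → ℝ) → ℝ)
    (ψ φ : ℝ → ℝ) (mψ mφ : ℝ)
    (hψ : GoodLink ψ mψ) (hφ : GoodLink φ mφ) (hφlim : PSLink φ)
    (hWP : ∀ n, WellPosed μ (D n) (πs n) (rs n))
    (hC1 : ∀ n, Unconf μ (D n))
    (cπ : ℝ) (hcπ : 0 < cπ ∧ cπ < 1 / 2)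
    (hC2 : ∀ n, Cond2 μ cπ (D n) (πs n))
    (mY : ℝ) (hC4 : ∀ n, Cond4 μ mY (D n) (rs n))
    (mZ σZ : ℝ) (hC5 : ∀ n, Cond5 μ mZ σZ (hp n) (D n))
    (mr : ℝ)
    (hC6 : Tendsto (fun n => μ {ω | ∀ i, |rh ψ (D n) ω i| ≤ mr ∧ |rhAux ψ (D n) ω i| ≤ mr})
      atTop (𝓝 1))
    (γstar : ∀ n, Fin (p n) → ℝ) (sπ : ℕ → ℕ)
    (hGLMp : ∀ n x, πs n x = φ (dot x (γstar n)))
    (hsπ0 : ∀ n, sparsity (γstar n) = sπ n)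
    (hratePS : ∃ C : ℝ, Tendsto (fun n => μ {ω |
        l1 (fun j => (D n).ghat ω j - γstar n j)
          ≤ C * (sπ n : ℝ) * Real.sqrt (Real.log (p n) / (n : ℝ)) ∧
        l2 (fun j => (D n).ghat ω j - γstar n j)
          ≤ C * Real.sqrt ((sπ n : ℝ) * Real.log (p n) / (n : ℝ))}) atTop (𝓝 1))
    (hC9 : Cond9 φ)
    (hsπSmall : Tendsto (fun n => (sπ n : ℝ) * Real.log (p n) / Real.sqrt (n : ℝ))
      atTop (𝓝 0))
    :
    ∃ C₀ : ℝ, 0 < C₀ ∧ ∀ Mγ : ℝ, C₀ ≤ Mγ →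
      Tendsto (fun n : ℕ => μ {ω | ∀ i,
          (|dot ((D n).X ω i) ((D n).ghat ω)| ≤ Mγ ∧
            |dot ((D n).Xaux ω i) ((D n).ghat ω)| ≤ Mγ) ∧
          ph φ Mγ (D n) ω i = φ (dot ((D n).X ω i) ((D n).ghat ω)) ∧
          phAux φ Mγ (D n) ω i = φ (dot ((D n).Xaux ω i) ((D n).ghat ω))})
        atTop (𝓝 1) := by
  classical
  obtain ⟨C, hrate⟩ := hratePS
  obtain ⟨hc0, hc12⟩ := hcπ
  -- a bound `A` on `|w|` whenever `cπ < φ w < 1 - cπ`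
  obtain ⟨t₂, ht₂⟩ : ∃ t₂ : ℝ, ∀ t ≥ t₂, 1 - cπ < φ t :=
    eventually_atTop.1 (hφlim.1.eventually (eventually_gt_nhds (by linarith)))
  obtain ⟨t₁, ht₁⟩ : ∃ t₁ : ℝ, ∀ t ≤ t₁, φ t < cπ :=
    eventually_atBot.1 (hφlim.2.eventually (eventually_lt_nhds hc0))
  set A : ℝ := |t₁| + |t₂| with hAdef
  have hAw : ∀ w : ℝ, cπ < φ w → φ w < 1 - cπ → |w| ≤ A := by
    intro w hw1 hw2
    have hw3 : t₁ < w := by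
      by_contra h
      push_neg at h
      have := ht₁ w h
      linarith
    have hw4 : w < t₂ := by
      by_contra h
      push_neg at h
      have := ht₂ w h
      linarith
    rw [abs_le]
    constructor
    · have h1 := neg_abs_le t₁
      have h2 := abs_nonneg t₂
      simp only [hAdef]
      linarith
    · have h1 := le_abs_self t₂
      have h2 := abs_nonneg t₁
      simp only [hAdef]
      linarith
  have hA0 : 0 ≤ A := by positivity
  refine ⟨A + 1, by linarith, ?_⟩
  intro Mγ hMγ
  set M : ℝ := max 1 |mZ| with hMdef
  have hM1 : (1:ℝ) ≤ M := le_max_left _ _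
  have hM0 : (0:ℝ) ≤ M := by linarith
  have hMZ : |mZ| ≤ M := le_max_right _ _
  -- eventual smallness of the error
  have hlogp : ∀ᶠ n in atTop, 1 ≤ Real.log (p n) := by
    filter_upwards [hpTop.eventually (eventually_ge_atTop 3)] with n hn
    have h3 : (3:ℝ) ≤ (p n : ℝ) := by exact_mod_cast hn
    have hexp : Real.exp 1 ≤ 3 := by
      have := Real.exp_one_lt_d9
      linarith
    rw [Real.le_log_iff_exp_le (by linarith)]
    linarith
  set e : ℕ → ℝ :=
    fun n => |C| * ((sπ n : ℝ) * Real.sqrt (Real.log (p n) / (n:ℝ))) with he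
  have heM : Tendsto (fun n => M * e n) atTop (𝓝 0) := by
    apply squeeze_zero'
      (g := fun n => (M * |C|) * ((sπ n : ℝ) * Real.log (p n) / Real.sqrt (n:ℝ)))
    · filter_upwards with n
      simp only [he]
      positivity
    · filter_upwards [hlogp] with n hn
      have hlog0 : (0:ℝ) ≤ Real.log (p n) := by linarith
      have hs : Real.sqrt (Real.log (p n) / (n:ℝ))
          ≤ Real.log (p n) / Real.sqrt (n:ℝ) := by
        rw [Real.sqrt_div hlog0]
        gcongr
        nlinarith [Real.sq_sqrt hlog0, Real.sqrt_nonneg (Real.log (p n))]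
      calc M * e n
          = (M * |C|) * ((sπ n : ℝ) * Real.sqrt (Real.log (p n) / (n:ℝ))) := by
            simp only [he]; ring
        _ ≤ (M * |C|) * ((sπ n : ℝ) * (Real.log (p n) / Real.sqrt (n:ℝ))) := by
            gcongr
        _ = (M * |C|) * ((sπ n : ℝ) * Real.log (p n) / Real.sqrt (n:ℝ)) := by ring
    · simpa using hsπSmall.const_mul (M * |C|)
  have hMe : ∀ᶠ n in atTop, M * e n ≤ 1 := heM.eventually (eventually_le_nhds one_pos)
  -- squeeze the probabilities
  apply tendsto_of_tendsto_of_tendsto_of_le_of_le' hrate tendsto_const_nhds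
  · -- lower bound
    filter_upwards [hMe] with n hn
    have hID6 := (hWP n).2.2.2.2.2.1
    have h2 := hC2 n
    have h5 := (hC5 n).1
    -- the bounded-covariates set
    set B : Set (Fin (p n) → ℝ) := {x | ∀ j, |x j| ≤ M} with hBdef
    have hBmeas : MeasurableSet B := by
      have : B = ⋂ j, {x : Fin (p n) → ℝ | |x j| ≤ M} := by
        ext x
        simp [hBdef, Set.mem_iInter]
      rw [this]
      exact MeasurableSet.iInter fun j =>
        measurableSet_le ((measurable_pi_apply j).abs) measurable_const
    have hXinB : ∀ (w : Fin (p n) → ℝ),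
        (w ⟨0, hp n⟩ = 1 ∧ ∀ j : Fin (p n), j ≠ ⟨0, hp n⟩ → |w j| ≤ mZ) → w ∈ B := by
      intro w hw j
      rcases eq_or_ne j ⟨0, hp n⟩ with rfl | hj
      · rw [hw.1]
        simpa using hM1
      · exact le_trans (le_trans (hw.2 j hj) (le_abs_self mZ)) hMZ
    have hXB : ∀ i : Fin n, ∀ᵐ ω ∂μ, (D n).X ω i ∈ B := by
      intro i
      filter_upwards [h5] with ω hω
      exact hXinB _ (hω i)
    have hauxB : ∀ᵐ ω ∂μ, ∀ i, (D n).Xaux ω i ∈ B := by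
      rw [ae_all_iff]
      intro i
      have hid : IdentDistrib (fun ω => (D n).Xaux ω i) (fun ω => (D n).X ω i) μ μ :=
        (hID6 i i).comp measurable_fst
      have h0 : μ ((fun ω => (D n).X ω i) ⁻¹' Bᶜ) = 0 := by
        have hXi := hXB i
        rwa [ae_iff] at hXi
      have heq := hid.measure_mem_eq hBmeas.compl
      rw [ae_iff]
      calc μ {ω | ¬ (D n).Xaux ω i ∈ B}
          = μ ((fun ω => (D n).Xaux ω i) ⁻¹' Bᶜ) := rfl
        _ = μ ((fun ω => (D n).X ω i) ⁻¹' Bᶜ) := heq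
        _ = 0 := h0
    -- combined good event
    have hgood : ∀ᵐ ω ∂μ,
        ((∀ i, (cπ < πs n ((D n).X ω i) ∧ πs n ((D n).X ω i) < 1 - cπ) ∧
            (cπ < πs n ((D n).Xaux ω i) ∧ πs n ((D n).Xaux ω i) < 1 - cπ)) ∧
         (∀ i, (D n).X ω i ∈ B) ∧ (∀ i, (D n).Xaux ω i ∈ B)) := by
      filter_upwards [h2, h5, hauxB] with ω a b c
      exact ⟨a, fun i => hXinB _ (b i), c⟩
    -- pointwise implication on the good event
    have hkey : ∀ ω,
        (l1 (fun j => (D n).ghat ω j - γstar n j)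
            ≤ C * (sπ n : ℝ) * Real.sqrt (Real.log (p n) / (n : ℝ)) ∧
          l2 (fun j => (D n).ghat ω j - γstar n j)
            ≤ C * Real.sqrt ((sπ n : ℝ) * Real.log (p n) / (n : ℝ))) →
        ((∀ i, (cπ < πs n ((D n).X ω i) ∧ πs n ((D n).X ω i) < 1 - cπ) ∧
            (cπ < πs n ((D n).Xaux ω i) ∧ πs n ((D n).Xaux ω i) < 1 - cπ)) ∧
         (∀ i, (D n).X ω i ∈ B) ∧ (∀ i, (D n).Xaux ω i ∈ B)) →
        ∀ i, (|dot ((D n).X ω i) ((D n).ghat ω)| ≤ Mγ ∧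
              |dot ((D n).Xaux ω i) ((D n).ghat ω)| ≤ Mγ) ∧
            ph φ Mγ (D n) ω i = φ (dot ((D n).X ω i) ((D n).ghat ω)) ∧
            phAux φ Mγ (D n) ω i = φ (dot ((D n).Xaux ω i) ((D n).ghat ω)) := by
      intro ω hR hG i
      obtain ⟨hg2, hg5, hgaux⟩ := hG
      have hsq : (0:ℝ) ≤ (sπ n : ℝ) * Real.sqrt (Real.log (p n) / (n:ℝ)) := by positivity
      have hl1e : l1 (fun j => (D n).ghat ω j - γstar n j) ≤ e n := by
        refine le_trans hR.1 ?_
        calc C * (sπ n : ℝ) * Real.sqrt (Real.log (p n) / (n:ℝ))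
            = C * ((sπ n : ℝ) * Real.sqrt (Real.log (p n) / (n:ℝ))) := by ring
          _ ≤ |C| * ((sπ n : ℝ) * Real.sqrt (Real.log (p n) / (n:ℝ))) :=
              mul_le_mul_of_nonneg_right (le_abs_self C) hsq
      have hMl1 : M * l1 (fun j => (D n).ghat ω j - γstar n j) ≤ 1 :=
        le_trans (mul_le_mul_of_nonneg_left hl1e hM0) hn
      have hstar : |dot ((D n).X ω i) (γstar n)| ≤ A := by
        refine hAw _ ?_ ?_
        · have hh := (hg2 i).1.1
          rwa [hGLMp] at hh
        · have hh := (hg2 i).1.2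
          rwa [hGLMp] at hh
      have hstarAux : |dot ((D n).Xaux ω i) (γstar n)| ≤ A := by
        refine hAw _ ?_ ?_
        · have hh := (hg2 i).2.1
          rwa [hGLMp] at hh
        · have hh := (hg2 i).2.2
          rwa [hGLMp] at hh
      have hmain : |dot ((D n).X ω i) ((D n).ghat ω)| ≤ Mγ := by
        calc |dot ((D n).X ω i) ((D n).ghat ω)|
            = |dot ((D n).X ω i) (γstar n) +
                dot ((D n).X ω i) (fun j => (D n).ghat ω j - γstar n j)| := by
              rw [← dot_split]
          _ ≤ |dot ((D n).X ω i) (γstar n)| +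
                |dot ((D n).X ω i) (fun j => (D n).ghat ω j - γstar n j)| := abs_add_le _ _
          _ ≤ A + M * l1 (fun j => (D n).ghat ω j - γstar n j) :=
              add_le_add hstar (abs_dot_le (hg5 i))
          _ ≤ A + 1 := by linarith
          _ ≤ Mγ := hMγ
      have haux : |dot ((D n).Xaux ω i) ((D n).ghat ω)| ≤ Mγ := by
        calc |dot ((D n).Xaux ω i) ((D n).ghat ω)|
            = |dot ((D n).Xaux ω i) (γstar n) +
                dot ((D n).Xaux ω i) (fun j => (D n).ghat ω j - γstar n j)| := by
              rw [← dot_split]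
          _ ≤ |dot ((D n).Xaux ω i) (γstar n)| +
                |dot ((D n).Xaux ω i) (fun j => (D n).ghat ω j - γstar n j)| := abs_add_le _ _
          _ ≤ A + M * l1 (fun j => (D n).ghat ω j - γstar n j) :=
              add_le_add hstarAux (abs_dot_le (hgaux i))
          _ ≤ A + 1 := by linarith
          _ ≤ Mγ := hMγ
      refine ⟨⟨hmain, haux⟩, ?_, ?_⟩
      · unfold ph
        rw [clamp_eq_self hmain]
      · unfold phAux
        rw [clamp_eq_self haux]
    -- measure computation
    have hnull := ae_iff.mp hgood
    calc μ {ω | l1 (fun j => (D n).ghat ω j - γstar n j)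
            ≤ C * (sπ n : ℝ) * Real.sqrt (Real.log (p n) / (n : ℝ)) ∧
          l2 (fun j => (D n).ghat ω j - γstar n j)
            ≤ C * Real.sqrt ((sπ n : ℝ) * Real.log (p n) / (n : ℝ))}
        ≤ μ ({ω | ∀ i, (|dot ((D n).X ω i) ((D n).ghat ω)| ≤ Mγ ∧
              |dot ((D n).Xaux ω i) ((D n).ghat ω)| ≤ Mγ) ∧
            ph φ Mγ (D n) ω i = φ (dot ((D n).X ω i) ((D n).ghat ω)) ∧
            phAux φ Mγ (D n) ω i = φ (dot ((D n).Xaux ω i) ((D n).ghat ω))} ∪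
          {ω | ¬ ((∀ i, (cπ < πs n ((D n).X ω i) ∧ πs n ((D n).X ω i) < 1 - cπ) ∧
            (cπ < πs n ((D n).Xaux ω i) ∧ πs n ((D n).Xaux ω i) < 1 - cπ)) ∧
            (∀ i, (D n).X ω i ∈ B) ∧ (∀ i, (D n).Xaux ω i ∈ B))}) := by
          apply measure_mono
          intro ω hω
          by_cases hg : ((∀ i, (cπ < πs n ((D n).X ω i) ∧ πs n ((D n).X ω i) < 1 - cπ) ∧
            (cπ < πs n ((D n).Xaux ω i) ∧ πs n ((D n).Xaux ω i) < 1 - cπ)) ∧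
            (∀ i, (D n).X ω i ∈ B) ∧ (∀ i, (D n).Xaux ω i ∈ B))
          · exact Or.inl (hkey ω hω hg)
          · exact Or.inr hg
      _ ≤ μ {ω | ∀ i, (|dot ((D n).X ω i) ((D n).ghat ω)| ≤ Mγ ∧
              |dot ((D n).Xaux ω i) ((D n).ghat ω)| ≤ Mγ) ∧
            ph φ Mγ (D n) ω i = φ (dot ((D n).X ω i) ((D n).ghat ω)) ∧
            phAux φ Mγ (D n) ω i = φ (dot ((D n).Xaux ω i) ((D n).ghat ω))} +
          μ {ω | ¬ ((∀ i, (cπ < πs n ((D n).X ω i) ∧ πs n ((D n).X ω i) < 1 - cπ) ∧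
            (cπ < πs n ((D n).Xaux ω i) ∧ πs n ((D n).Xaux ω i) < 1 - cπ)) ∧
            (∀ i, (D n).X ω i ∈ B) ∧ (∀ i, (D n).Xaux ω i ∈ B))} := measure_union_le _ _
      _ = μ {ω | ∀ i, (|dot ((D n).X ω i) ((D n).ghat ω)| ≤ Mγ ∧
              |dot ((D n).Xaux ω i) ((D n).ghat ω)| ≤ Mγ) ∧
            ph φ Mγ (D n) ω i = φ (dot ((D n).X ω i) ((D n).ghat ω)) ∧
            phAux φ Mγ (D n) ω i = φ (dot ((D n).Xaux ω i) ((D n).ghat ω))} := by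
          rw [hnull, add_zero]
  · -- upper bound
    filter_upwards with n
    exact prob_le_one

end DCalATE
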